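/- Let d ∈ ℂ, let U ⊆ ℂ be open and let q : U → ℂ be complex differentiable and nowhere zero, satisfying the Riccati equation q' = −q² − (t/2)q − (d+1)/2 on U. Then for every θ₀ ∈ ℂ with (θ₀ − 1)² = (d + 1)², the function q satisfies PIV(θ₀, d) on U, i.e. q'' = (q')²/(2q) + (3/2)q³ + t q² + (q/8)(4d + t²) − (θ₀−1)²/(8q). -/

import Mathlib

/-- A nowhere-zero solution of the Riccati equation `q' = −q² − (t/2)q − (d+1)/2`
satisfies the fourth Painlevé equation `PIV(θ₀, d)` for every `θ₀` with
`(θ₀ − 1)² = (d + 1)²`. -/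
theorem stmt_5 (d : ℂ) (U : Set ℂ) (hU : IsOpen U) (q : ℂ → ℂ)
    (hq : ∀ t ∈ U, DifferentiableAt ℂ q t)
    (hq0 : ∀ t ∈ U, q t ≠ 0)
    (hric : ∀ t ∈ U, deriv q t = -(q t) ^ 2 - (t/2) * q t - (d + 1) / 2) :
    ∀ θ₀ : ℂ, (θ₀ - 1) ^ 2 = (d + 1) ^ 2 →
      ∀ t ∈ U, deriv (deriv q) t =
        (deriv q t) ^ 2 / (2 * q t) + (3/2) * (q t) ^ 3 + t * (q t) ^ 2
          + (q t / 8) * (4 * d + t ^ 2) - (θ₀ - 1) ^ 2 / (8 * q t) := by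
  intro θ₀ hθ t ht
  have hqd := (hq t ht).hasDerivAt
  have hev : deriv q =ᶠ[nhds t] fun s => -(q s) ^ 2 - (s / 2) * q s - (d + 1) / 2 :=
    Filter.eventuallyEq_of_mem (hU.mem_nhds ht) hric
  have h1 : HasDerivAt (fun s => (q s) ^ 2) (2 * q t * deriv q t) t := by
    simpa [mul_comm, mul_assoc] using hqd.fun_pow 2
  have h2 : HasDerivAt (fun s => (s / 2) * q s)
      ((1 / 2) * q t + (t / 2) * deriv q t) t := by
    simpa using ((hasDerivAt_id t).div_const 2).fun_mul hqd
  have h3 : HasDerivAt (fun s => -(q s) ^ 2 - (s / 2) * q s - (d + 1) / 2)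
      (-(2 * q t * deriv q t) - ((1 / 2) * q t + (t / 2) * deriv q t)) t :=
    (h1.neg.sub h2).sub_const _
  have key : deriv (deriv q) t
      = -(2 * q t * deriv q t) - ((1 / 2) * q t + (t / 2) * deriv q t) := by
    rw [hev.deriv_eq, h3.deriv]
  rw [key, hric t ht, hθ]
  have h0 := hq0 t ht
  have hinv : q t * (q t)⁻¹ = 1 := mul_inv_cancel₀ h0
  linear_combination -((q t) ^ 3 / 2 + t * (q t) ^ 2 / 2 + ((d + 1) / 2 + t ^ 2 / 8) * q t
      + t * (d + 1) / 4) * hinv
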